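/- As Λ → +∞ with masses m₁ = m₁(Λ), m₂ = m₂(Λ) → ∞ chosen under the Pauli-Villars conditions, the pointwise limit lim ((2 log Λ)/(3π) - M(k)) = U(k) holds for each fixed k ∈ ℝ³, where U is the Uehling multiplier. -/

import Mathlib

open Real Filter

/-- The Pauli–Villars multiplier `M(k)`. -/
noncomputable def pvM (c m : Fin 3 → ℝ) (k : EuclideanSpace ℝ (Fin 3)) : ℝ :=
  -(2 / π) * ∑ j : Fin 3, c j *
    ∫ u in (0 : ℝ)..1, u * (1 - u) * Real.log ((m j) ^ 2 + u * (1 - u) * ‖k‖ ^ 2)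

/-- The Uehling multiplier. -/
noncomputable def uehlingU (k : EuclideanSpace ℝ (Fin 3)) : ℝ :=
  (‖k‖ ^ 2 / (4 * π)) *
    ∫ z in (0 : ℝ)..1, (z ^ 2 - z ^ 4 / 3) / (1 + ‖k‖ ^ 2 * (1 - z ^ 2) / 4)


/-- The remainder integral. -/
noncomputable def pvG (K a : ℝ) : ℝ :=
  ∫ u in (0:ℝ)..1, u * (1 - u) * Real.log (1 + u * (1 - u) * K / a)

lemma pvG_cont (K a : ℝ) (hK : 0 ≤ K) (ha : 0 < a) :
    ContinuousOn (fun u : ℝ => u * (1 - u) * Real.log (1 + u * (1 - u) * K / a))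
      (Set.Icc 0 1) := by
  apply ContinuousOn.mul (by fun_prop)
  apply ContinuousOn.log (by fun_prop)
  intro u hu
  obtain ⟨h0, h1⟩ := hu
  have ht : 0 ≤ u * (1 - u) * K / a :=
    div_nonneg (mul_nonneg (mul_nonneg h0 (by linarith)) hK) ha.le
  positivity

lemma pvG_integrable (K a : ℝ) (hK : 0 ≤ K) (ha : 0 < a) :
    IntervalIntegrable (fun u : ℝ => u * (1 - u) * Real.log (1 + u * (1 - u) * K / a))
      MeasureTheory.volume 0 1 := by
  apply ContinuousOn.intervalIntegrable
  rw [Set.uIcc_of_le zero_le_one]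
  exact pvG_cont K a hK ha

lemma pvG_bound (K a : ℝ) (hK : 0 ≤ K) (ha : 0 < a) :
    |pvG K a| ≤ K / (16 * a) := by
  have := intervalIntegral.norm_integral_le_of_norm_le_const
    (a := 0) (b := 1) (C := K / (16 * a))
    (f := fun u : ℝ => u * (1 - u) * Real.log (1 + u * (1 - u) * K / a)) ?_
  · simpa [pvG] using this
  · intro u hu
    rw [Set.uIoc_of_le zero_le_one] at hu
    obtain ⟨h0, h1⟩ := hu
    have ht0 : 0 ≤ u * (1 - u) := mul_nonneg h0.le (by linarith)
    have ht4 : u * (1 - u) ≤ 1 / 4 := by nlinarith [sq_nonneg (u - 1/2)]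
    have harg : (0:ℝ) < 1 + u * (1 - u) * K / a := by
      have : 0 ≤ u * (1 - u) * K / a := div_nonneg (mul_nonneg ht0 hK) ha.le
      linarith
    have hlog0 : 0 ≤ Real.log (1 + u * (1 - u) * K / a) := by
      apply Real.log_nonneg
      have : 0 ≤ u * (1 - u) * K / a := div_nonneg (mul_nonneg ht0 hK) ha.le
      linarith
    have hlogle : Real.log (1 + u * (1 - u) * K / a) ≤ u * (1 - u) * K / a := by
      have := Real.log_le_sub_one_of_pos harg
      linarith
    rw [Real.norm_eq_abs, abs_of_nonneg (mul_nonneg ht0 hlog0)]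
    calc u * (1 - u) * Real.log (1 + u * (1 - u) * K / a)
        ≤ u * (1 - u) * (u * (1 - u) * K / a) := by
          exact mul_le_mul_of_nonneg_left hlogle ht0
      _ = (u * (1 - u)) ^ 2 * (K / a) := by ring
      _ ≤ (1/4) ^ 2 * (K / a) := by
          have hKa : 0 ≤ K / a := div_nonneg hK ha.le
          exact mul_le_mul_of_nonneg_right (pow_le_pow_left₀ ht0 ht4 2) hKa
      _ = K / (16 * a) := by ring

lemma pv_split (K a : ℝ) (hK : 0 ≤ K) (ha : 0 < a) :
    ∫ u in (0:ℝ)..1, u * (1 - u) * Real.log (a + u * (1 - u) * K)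
      = Real.log a / 6 + pvG K a := by
  have heq : Set.EqOn
      (fun u : ℝ => u * (1 - u) * Real.log (a + u * (1 - u) * K))
      (fun u : ℝ => u * (1 - u) * Real.log a
        + u * (1 - u) * Real.log (1 + u * (1 - u) * K / a))
      (Set.uIcc 0 1) := by
    intro u hu
    rw [Set.uIcc_of_le zero_le_one] at hu
    obtain ⟨h0, h1⟩ := hu
    have ht0 : 0 ≤ u * (1 - u) := mul_nonneg h0 (by linarith)
    have harg : (0:ℝ) < 1 + u * (1 - u) * K / a := by
      have : 0 ≤ u * (1 - u) * K / a := div_nonneg (mul_nonneg ht0 hK) ha.le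
      linarith
    have hrw : a + u * (1 - u) * K = a * (1 + u * (1 - u) * K / a) := by
      field_simp
    simp only
    rw [hrw, Real.log_mul ha.ne' harg.ne']
    ring
  rw [intervalIntegral.integral_congr heq]
  rw [intervalIntegral.integral_add
    (by apply Continuous.intervalIntegrable; fun_prop)
    (pvG_integrable K a hK ha)]
  have h6 : ∫ u in (0:ℝ)..1, u * (1 - u) * Real.log a = Real.log a / 6 := by
    have : (fun u : ℝ => u * (1 - u) * Real.log a)
        = fun u : ℝ => u * Real.log a - u ^ 2 * Real.log a := by
      funext u; ring
    rw [this, intervalIntegral.integral_sub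
      (by apply Continuous.intervalIntegrable; fun_prop)
      (by apply Continuous.intervalIntegrable; fun_prop),
      intervalIntegral.integral_mul_const, intervalIntegral.integral_mul_const,
      integral_id, integral_pow]
    norm_num
    ring
  rw [h6, pvG]

lemma stepA (K : ℝ) (hK : 0 ≤ K) :
    pvG K 1 = ∫ z in (0:ℝ)..1, (1/4 - z^2/4) * Real.log (1 + (1/4 - z^2/4) * K) := by
  set H : ℝ → ℝ := fun u => u * (1 - u) * Real.log (1 + u * (1 - u) * K / 1) with hH
  set Q : ℝ → ℝ := fun z => (1/4 - z^2/4) * Real.log (1 + (1/4 - z^2/4) * K) with hQ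
  have hHQ : (fun z : ℝ => H (1/2 * z + 1/2)) = Q := by
    funext z
    simp only [hH, hQ, div_one]
    rw [show (1/2 * z + 1/2) * (1 - (1/2 * z + 1/2)) = 1/4 - z^2/4 by ring]
  have hQcont : ContinuousOn Q (Set.Icc (-1) 1) := by
    apply ContinuousOn.mul (by fun_prop)
    apply ContinuousOn.log (by fun_prop)
    intro z hz
    obtain ⟨hz1, hz2⟩ := hz
    have hz3 : z^2 ≤ 1 := by nlinarith
    have : 0 ≤ (1/4 - z^2/4) * K := mul_nonneg (by linarith) hK
    positivity
  have hint1 : IntervalIntegrable Q MeasureTheory.volume (-1) 0 := by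
    apply ContinuousOn.intervalIntegrable
    apply hQcont.mono
    rw [Set.uIcc_of_le (by norm_num : (-1:ℝ) ≤ 0)]
    exact Set.Icc_subset_Icc le_rfl (by norm_num)
  have hint2 : IntervalIntegrable Q MeasureTheory.volume 0 1 := by
    apply ContinuousOn.intervalIntegrable
    apply hQcont.mono
    rw [Set.uIcc_of_le (by norm_num : (0:ℝ) ≤ 1)]
    exact Set.Icc_subset_Icc (by norm_num) le_rfl
  have h1 : ∫ z in (-1:ℝ)..1, H (1/2 * z + 1/2) = 2 * ∫ u in (0:ℝ)..1, H u := by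
    have := intervalIntegral.integral_comp_mul_add (a := -1) (b := 1) H
      (by norm_num : (1/2:ℝ) ≠ 0) (1/2)
    norm_num at this
    convert this using 2 <;> norm_num
  have h2 : ∫ z in (-1:ℝ)..0, Q z = ∫ z in (0:ℝ)..1, Q z := by
    have hneg := intervalIntegral.integral_comp_neg (a := 0) (b := 1) Q
    have hQeven : ∀ z : ℝ, Q (-z) = Q z := by
      intro z; simp only [hQ]; ring_nf
    simp only [hQeven, neg_zero] at hneg
    rw [← hneg]
  have h3 : (∫ z in (-1:ℝ)..0, Q z) + ∫ z in (0:ℝ)..1, Q z = ∫ z in (-1:ℝ)..1, Q z :=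
    intervalIntegral.integral_add_adjacent_intervals hint1 hint2
  rw [hHQ] at h1
  have h4 : ∫ u in (0:ℝ)..1, H u = ∫ z in (0:ℝ)..1, Q z := by linarith
  simpa [pvG, hH, hQ] using h4

lemma stepB (K : ℝ) (hK : 0 ≤ K) :
    ∫ z in (0:ℝ)..1, (1/4 - z^2/4) * Real.log (1 + (1/4 - z^2/4) * K)
      = (K/8) * ∫ z in (0:ℝ)..1, (z^2 - z^4/3) / (1 + K * (1 - z^2) / 4) := by
  set D : ℝ → ℝ := fun z => 1 + K * (1 - z^2) / 4 with hD
  have hDpos : ∀ z ∈ Set.uIcc (0:ℝ) 1, 0 < D z := by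
    intro z hz
    rw [Set.uIcc_of_le zero_le_one] at hz
    obtain ⟨h0, h1⟩ := hz
    have : 0 ≤ K * (1 - z^2) / 4 := by
      apply div_nonneg _ (by norm_num)
      exact mul_nonneg hK (by nlinarith)
    simp only [hD]; linarith
  set L : ℝ → ℝ := fun z => Real.log (D z) with hL
  set L' : ℝ → ℝ := fun z => (-(K * z / 2)) / D z with hL'
  have hLderiv : ∀ z ∈ Set.uIcc (0:ℝ) 1, HasDerivAt L (L' z) z := by
    intro z hz
    have hd : HasDerivAt D (-(K * z / 2)) z := by
      have h1 : HasDerivAt (fun z : ℝ => z^2) (2 * z) z := by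
        simpa using hasDerivAt_pow 2 z
      have h2 : HasDerivAt (fun z : ℝ => 1 - z^2) (-(2 * z)) z := h1.const_sub 1
      have h3 := ((h2.const_mul K).div_const 4).const_add 1
      exact h3.congr_deriv (by ring)
    exact hd.log (hDpos z hz).ne'
  have hVderiv : ∀ z ∈ Set.uIcc (0:ℝ) 1,
      HasDerivAt (fun z : ℝ => z - z^3/3) (1 - z^2) z := by
    intro z _
    have h1 : HasDerivAt (fun z : ℝ => z^3) (3 * z^2) z := by
      simpa using hasDerivAt_pow 3 z
    have := (hasDerivAt_id z).sub (h1.div_const 3)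
    exact this.congr_deriv (by ring)
  have hL'int : IntervalIntegrable L' MeasureTheory.volume 0 1 := by
    apply ContinuousOn.intervalIntegrable
    apply ContinuousOn.div (by fun_prop) (by fun_prop)
    intro z hz
    exact (hDpos z hz).ne'
  have hV'int : IntervalIntegrable (fun z : ℝ => 1 - z^2) MeasureTheory.volume 0 1 := by
    apply Continuous.intervalIntegrable; fun_prop
  have hparts := intervalIntegral.integral_mul_deriv_eq_deriv_mul
    hLderiv hVderiv hL'int hV'int
  have hL1 : L 1 = 0 := by simp [hL, hD]
  rw [hL1] at hparts
  norm_num at hparts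
  -- LHS of goal equals ∫ L z * (1 - z^2) dz / ... relate
  have hcongr1 : ∀ z : ℝ, (1/4 - z^2/4) * Real.log (1 + (1/4 - z^2/4) * K)
      = (1/4) * (L z * (1 - z^2)) := by
    intro z
    simp only [hL, hD]
    rw [show 1 + (1/4 - z^2/4) * K = 1 + K * (1 - z^2)/4 by ring]
    ring
  have hcongr2 : Set.EqOn (fun z : ℝ => -(L' z * (z - z^3/3)))
      (fun z : ℝ => (K/2) * ((z^2 - z^4/3) / D z)) (Set.uIcc 0 1) := by
    intro z hz
    have hDne := (hDpos z hz).ne'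
    simp only [hL']
    field_simp
  calc ∫ z in (0:ℝ)..1, (1/4 - z^2/4) * Real.log (1 + (1/4 - z^2/4) * K)
      = ∫ z in (0:ℝ)..1, (1/4) * (L z * (1 - z^2)) := by
        apply intervalIntegral.integral_congr; intro z _; exact hcongr1 z
    _ = (1/4) * ∫ z in (0:ℝ)..1, L z * (1 - z^2) := by
        rw [intervalIntegral.integral_const_mul]
    _ = (1/4) * ∫ z in (0:ℝ)..1, -(L' z * (z - z^3/3)) := by
        rw [hparts, intervalIntegral.integral_neg]
    _ = (1/4) * ∫ z in (0:ℝ)..1, (K/2) * ((z^2 - z^4/3) / D z) := by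
        rw [intervalIntegral.integral_congr hcongr2]
    _ = (K/8) * ∫ z in (0:ℝ)..1, (z^2 - z^4/3) / (1 + K * (1 - z^2) / 4) := by
        rw [intervalIntegral.integral_const_mul]
        simp only [hD]
        ring

/-- As `Λ → ∞` with masses `m₁(Λ), m₂(Λ) → ∞` chosen under the Pauli–Villars conditions
(with `m₀ = 1`, bounded coefficients, and `log Λ² = -Σⱼ cⱼ log mⱼ²`), the multiplier `M`
converges pointwise: `(2 log Λ)/(3π) - M(k) → U(k)`. -/
theorem pvM_tendsto_uehling (c m : ℝ → Fin 3 → ℝ)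
    (hc0 : ∀ Λ : ℝ, c Λ 0 = 1) (hm0 : ∀ Λ : ℝ, m Λ 0 = 1)
    (hmpos : ∀ Λ : ℝ, ∀ j : Fin 3, 0 < m Λ j)
    (hsum : ∀ Λ : ℝ, ∑ j : Fin 3, c Λ j = 0)
    (hsum2 : ∀ Λ : ℝ, ∑ j : Fin 3, c Λ j * (m Λ j) ^ 2 = 0)
    (hlog : ∀ᶠ Λ : ℝ in atTop,
      Real.log (Λ ^ 2) = -∑ j : Fin 3, c Λ j * Real.log ((m Λ j) ^ 2))
    (hcbound : ∃ C : ℝ, ∀ Λ : ℝ, ∀ j : Fin 3, |c Λ j| ≤ C)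
    (hm1 : Tendsto (fun Λ : ℝ => m Λ 1) atTop atTop)
    (hm2 : Tendsto (fun Λ : ℝ => m Λ 2) atTop atTop)
    (k : EuclideanSpace ℝ (Fin 3)) :
    Tendsto (fun Λ : ℝ => (2 * Real.log Λ) / (3 * π) - pvM (c Λ) (m Λ) k) atTop
      (nhds (uehlingU k)) := by
  have hK : (0:ℝ) ≤ ‖k‖ ^ 2 := by positivity
  have hπ : (0:ℝ) < π := Real.pi_pos
  obtain ⟨C, hC⟩ := hcbound
  have hC0 : 0 ≤ C := le_trans (abs_nonneg _) (hC 0 0)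
  -- the eventual reduced form
  have key : ∀ᶠ Λ : ℝ in atTop,
      (2 * Real.log Λ) / (3 * π) - pvM (c Λ) (m Λ) k
        = (2 / π) * (pvG (‖k‖^2) 1 + c Λ 1 * pvG (‖k‖^2) ((m Λ 1)^2)
            + c Λ 2 * pvG (‖k‖^2) ((m Λ 2)^2)) := by
    filter_upwards [hlog] with Λ hlogΛ
    have h1p : (0:ℝ) < (m Λ 1)^2 := pow_pos (hmpos Λ 1) 2
    have h2p : (0:ℝ) < (m Λ 2)^2 := pow_pos (hmpos Λ 2) 2
    have e0 := pv_split (‖k‖^2) ((m Λ 0)^2) hK (pow_pos (hmpos Λ 0) 2)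
    have e1 := pv_split (‖k‖^2) ((m Λ 1)^2) hK h1p
    have e2 := pv_split (‖k‖^2) ((m Λ 2)^2) hK h2p
    rw [Fin.sum_univ_three] at hlogΛ
    rw [hc0 Λ, hm0 Λ] at hlogΛ
    simp only [one_pow, Real.log_one, Real.log_pow, one_mul, Nat.cast_ofNat] at hlogΛ
    have hlin : c Λ 1 * (2 * Real.log (m Λ 1)) + c Λ 2 * (2 * Real.log (m Λ 2))
        = -(2 * Real.log Λ) := by linarith
    rw [pvM, Fin.sum_univ_three, e0, e1, e2, hc0 Λ, hm0 Λ]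
    simp only [one_pow, Real.log_one, Real.log_pow, Nat.cast_ofNat]
    linear_combination (1/(3*π)) * hlin
  -- limits of the error terms
  have herr : ∀ j : Fin 3, Tendsto (fun Λ : ℝ => m Λ j) atTop atTop →
      Tendsto (fun Λ : ℝ => c Λ j * pvG (‖k‖^2) ((m Λ j)^2)) atTop (nhds 0) := by
    intro j hmj
    apply squeeze_zero_norm' (a := fun Λ : ℝ => (C * (‖k‖^2/16)) * ((m Λ j)^2)⁻¹)
    · apply Eventually.of_forall
      intro Λ
      have hp : (0:ℝ) < (m Λ j)^2 := pow_pos (hmpos Λ j) 2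
      have hb := pvG_bound (‖k‖^2) ((m Λ j)^2) hK hp
      rw [Real.norm_eq_abs, abs_mul]
      calc |c Λ j| * |pvG (‖k‖^2) ((m Λ j)^2)|
          ≤ C * (‖k‖^2 / (16 * (m Λ j)^2)) :=
            mul_le_mul (hC Λ j) hb (abs_nonneg _) hC0
        _ = (C * (‖k‖^2/16)) * ((m Λ j)^2)⁻¹ := by
            field_simp
    · have hsq : Tendsto (fun Λ : ℝ => (m Λ j)^2) atTop atTop := by
        have := hmj.atTop_mul_atTop₀ hmj
        simpa [pow_two] using this
      have := (tendsto_inv_atTop_zero.comp hsq).const_mul (C * (‖k‖^2/16))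
      simpa using this
  have hlim : Tendsto (fun Λ : ℝ => (2 / π) * (pvG (‖k‖^2) 1
      + c Λ 1 * pvG (‖k‖^2) ((m Λ 1)^2) + c Λ 2 * pvG (‖k‖^2) ((m Λ 2)^2)))
      atTop (nhds ((2/π) * pvG (‖k‖^2) 1)) := by
    have := ((tendsto_const_nhds (x := pvG (‖k‖^2) 1) (f := atTop)).add
      (herr 1 hm1)).add (herr 2 hm2)
    have h2 := this.const_mul (2/π)
    simpa using h2
  have hval : (2/π) * pvG (‖k‖^2) 1 = uehlingU k := by
    rw [stepA _ hK, stepB _ hK, uehlingU]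
    field_simp
    ring
  rw [← hval]
  exact Tendsto.congr' (by filter_upwards [key] with Λ h; exact h.symm) hlim
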